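/- If every player in a finite n-player repeated game follows a no-regret (no-external-regret) strategy, then the distance from the empirical distribution Z_M of action profiles to the Hannan set H(G) converges to 0 almost surely. -/

import Mathlib

open MeasureTheory Filter Finset

noncomputable section

variable {n : ℕ} {A : Fin n → Type*}
  [∀ i, Fintype (A i)] [∀ i, DecidableEq (A i)]

/-- The Hannan set of the finite game with utilities `u`. -/
def HannanSet (u : Fin n → (∀ i, A i) → ℝ) : Set ((∀ i, A i) → ℝ) :=
  {Φ | (∀ z, 0 ≤ Φ z) ∧ (∑ z, Φ z = 1) ∧
    ∀ (i : Fin n) (b : A i),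
      (∑ z, Φ z * (u i (Function.update z i b) - u i z)) ≤ 0}

/-- Empirical distribution of the action profiles played up to stage `M`. -/
def empDist (play : ℕ → ∀ i, A i) (M : ℕ) : (∀ i, A i) → ℝ :=
  fun z => ((Finset.range M).filter (fun t => play t = z)).card / M

lemma empDist_mem_stdSimplex (p : ℕ → ∀ i, A i) {M : ℕ} (hM : 1 ≤ M) :
    empDist p M ∈ stdSimplex ℝ (∀ i, A i) := by
  constructor
  · intro z
    exact div_nonneg (by positivity) (by positivity)
  · unfold empDist
    rw [← Finset.sum_div]
    have : ∑ z : (∀ i, A i), (((Finset.range M).filter (fun t => p t = z)).card : ℝ)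
        = ((Finset.range M).card : ℝ) := by
      rw [Finset.card_eq_sum_card_fiberwise (f := p) (t := Finset.univ)
        (fun t _ => Finset.mem_univ _)]
      push_cast
      rfl
    rw [this, Finset.card_range]
    exact div_self (Nat.cast_ne_zero.2 (by omega))

lemma empDist_sum_eq (p : ℕ → ∀ i, A i) (M : ℕ) (g : (∀ i, A i) → ℝ) :
    ∑ z, empDist p M z * g z = (∑ t ∈ Finset.range M, g (p t)) / M := by
  have h1 : ∑ t ∈ Finset.range M, g (p t)
      = ∑ z : (∀ i, A i), (((Finset.range M).filter (fun t => p t = z)).card : ℝ) * g z := by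
    calc ∑ t ∈ Finset.range M, g (p t)
        = ∑ z : (∀ i, A i), ∑ t ∈ (Finset.range M).filter (fun t => p t = z), g (p t) :=
          (Finset.sum_fiberwise_of_maps_to (fun t _ => Finset.mem_univ (p t)) _).symm
      _ = ∑ z : (∀ i, A i), (((Finset.range M).filter (fun t => p t = z)).card : ℝ) * g z := by
          refine Finset.sum_congr rfl fun z _ => ?_
          have hcong : ∀ t ∈ (Finset.range M).filter (fun t => p t = z), g (p t) = g z :=
            fun t ht => by rw [(Finset.mem_filter.1 ht).2]
          rw [Finset.sum_congr rfl hcong, Finset.sum_const, nsmul_eq_mul]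
  rw [h1, Finset.sum_div]
  refine Finset.sum_congr rfl fun z _ => ?_
  unfold empDist
  rw [div_mul_eq_mul_div]

lemma hannan_key (u : Fin n → (∀ i, A i) → ℝ) (p : ℕ → ∀ i, A i)
    (h : ∀ (i : Fin n) (b : A i), limsup (fun M : ℕ => (∑ t ∈ Finset.range M,
      (u i (Function.update (p t) i b) - u i (p t))) / M) atTop ≤ 0) :
    Tendsto (fun M : ℕ => Metric.infDist (empDist p M) (HannanSet u))
      atTop (nhds 0) := by
  classical
  set g : (Σ i : Fin n, A i) → (∀ i, A i) → ℝ :=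
    fun q z => u q.1 (Function.update z q.1 q.2) - u q.1 z with hg
  set r : (Σ i : Fin n, A i) → ((∀ i, A i) → ℝ) → ℝ :=
    fun q Φ => ∑ z, Φ z * g q z with hrdef
  set m : ((∀ i, A i) → ℝ) → ℝ := fun Φ => ∑ q : Σ i : Fin n, A i, max (r q Φ) 0 with hmdef
  have hm_cont : Continuous m := by
    refine continuous_finset_sum _ fun q _ => Continuous.max ?_ continuous_const
    exact continuous_finset_sum _ fun z _ => (continuous_apply z).mul continuous_const
  have hm_nonneg : ∀ Φ, 0 ≤ m Φ :=
    fun Φ => Finset.sum_nonneg fun q _ => le_max_right _ _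
  have hmem : ∀ Φ, Φ ∈ stdSimplex ℝ (∀ i, A i) → m Φ = 0 → Φ ∈ HannanSet u := by
    intro Φ hΦ hmΦ
    refine ⟨hΦ.1, hΦ.2, fun i b => ?_⟩
    have := (Finset.sum_eq_zero_iff_of_nonneg (fun q _ => le_max_right (r q Φ) 0)).1 hmΦ
      ⟨i, b⟩ (Finset.mem_univ _)
    have h2 : r ⟨i, b⟩ Φ ≤ 0 := by
      by_contra hc
      push_neg at hc
      rw [max_eq_left hc.le] at this
      exact hc.ne' this
    exact h2
  -- m of empirical distribution is eventually small
  have hm_small : ∀ δ : ℝ, 0 < δ → ∀ᶠ M in atTop, m (empDist p M) < δ := by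
    intro δ hδ
    set N : ℕ := Fintype.card (Σ i : Fin n, A i) with hN
    set δ' : ℝ := δ / (N + 1) with hδ'
    have hδ'pos : 0 < δ' := by positivity
    have hq : ∀ q : Σ i : Fin n, A i, ∀ᶠ M in atTop, r q (empDist p M) < δ' := by
      intro q
      have hbdd : IsBoundedUnder (· ≤ ·) atTop
          (fun M : ℕ => (∑ t ∈ Finset.range M, g q (p t)) / M) := by
        refine isBoundedUnder_of ⟨∑ z : (∀ i, A i), |g q z|, fun M => ?_⟩
        have hC : 0 ≤ ∑ z : (∀ i, A i), |g q z| :=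
          Finset.sum_nonneg fun z _ => abs_nonneg _
        rcases Nat.eq_zero_or_pos M with hM | hM
        · simp [hM, hC]
        · rw [div_le_iff₀ (by positivity)]
          calc ∑ t ∈ Finset.range M, g q (p t)
              ≤ ∑ t ∈ Finset.range M, |g q (p t)| :=
                Finset.sum_le_sum fun t _ => le_abs_self _
            _ ≤ ∑ t ∈ Finset.range M, ∑ z : (∀ i, A i), |g q z| :=
                Finset.sum_le_sum fun t _ =>
                  Finset.single_le_sum (f := fun z => |g q z|) (fun z _ => abs_nonneg _) (Finset.mem_univ (p t))
            _ = (∑ z : (∀ i, A i), |g q z|) * M := by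
                rw [Finset.sum_const, Finset.card_range, nsmul_eq_mul, mul_comm]
      have hlim : limsup (fun M : ℕ => (∑ t ∈ Finset.range M, g q (p t)) / M) atTop < δ' :=
        lt_of_le_of_lt (h q.1 q.2) hδ'pos
      have := eventually_lt_of_limsup_lt hlim hbdd
      filter_upwards [this] with M hM
      rw [hrdef]
      simpa only [empDist_sum_eq] using hM
    have hall : ∀ᶠ M in atTop, ∀ q : Σ i : Fin n, A i, r q (empDist p M) < δ' :=
      eventually_all.2 hq
    filter_upwards [hall] with M hM
    calc m (empDist p M) ≤ ∑ _q : Σ i : Fin n, A i, δ' :=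
          Finset.sum_le_sum fun q _ => (max_lt (hM q) hδ'pos).le
      _ = N * δ' := by rw [Finset.sum_const, nsmul_eq_mul]; simp [hN]
      _ < (N + 1) * δ' := by
          have : (N : ℝ) < N + 1 := by linarith
          exact mul_lt_mul_of_pos_right this hδ'pos
      _ = δ := by rw [hδ', mul_div_assoc']; exact mul_div_cancel_left₀ δ (by positivity)
  -- key: small m inside the simplex forces membership in the thickening
  have hkey : ∀ ε : ℝ, 0 < ε → ∃ δ : ℝ, 0 < δ ∧ ∀ Φ ∈ stdSimplex ℝ (∀ i, A i),
      m Φ < δ → Φ ∈ Metric.thickening ε (HannanSet u) := by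
    intro ε hε
    by_cases hK : (stdSimplex ℝ (∀ i, A i) \ Metric.thickening ε (HannanSet u)).Nonempty
    · have hKc : IsCompact (stdSimplex ℝ (∀ i, A i) \ Metric.thickening ε (HannanSet u)) :=
        (isCompact_stdSimplex _ _).diff Metric.isOpen_thickening
      obtain ⟨Φ₀, hΦ₀, hmin⟩ := hKc.exists_isMinOn hK hm_cont.continuousOn
      refine ⟨m Φ₀, ?_, ?_⟩
      · rcases lt_or_eq_of_le (hm_nonneg Φ₀) with h' | h'
        · exact h'
        · exfalso
          have : Φ₀ ∈ HannanSet u := hmem Φ₀ hΦ₀.1 h'.symm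
          exact hΦ₀.2 (Metric.self_subset_thickening hε _ this)
      · intro Φ hΦ hmΦ
        by_contra hc
        exact absurd hmΦ (not_lt.2 (hmin ⟨hΦ, hc⟩))
    · refine ⟨1, one_pos, fun Φ hΦ _ => ?_⟩
      by_contra hc
      exact hK ⟨Φ, hΦ, hc⟩
  refine tendsto_order.2 ⟨fun a ha => ?_, fun a ha => ?_⟩
  · exact Eventually.of_forall fun M => lt_of_lt_of_le ha Metric.infDist_nonneg
  · obtain ⟨δ, hδ, hthick⟩ := hkey a ha
    filter_upwards [hm_small δ hδ, eventually_ge_atTop 1] with M h1 h2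
    obtain ⟨y, hy, hdist⟩ := Metric.mem_thickening_iff.1
      (hthick _ (empDist_mem_stdSimplex p h2) h1)
    exact lt_of_le_of_lt (Metric.infDist_le_dist_of_mem hy) hdist

theorem empirical_converges_to_Hannan
    (u : Fin n → (∀ i, A i) → ℝ)
    [∀ i, MeasurableSpace (A i)]
    {Ω : Type*} [MeasurableSpace Ω] (μ : Measure Ω) [IsProbabilityMeasure μ]
    (play : ℕ → Ω → ∀ i, A i) (hmeas : ∀ t, Measurable (play t))
    -- every player has no external regret along the play, almost surely
    (hNR : ∀ (i : Fin n) (b : A i), ∀ᵐ ω ∂μ,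
      limsup (fun M : ℕ => (∑ t ∈ Finset.range M,
        (u i (Function.update (play t ω) i b) - u i (play t ω))) / M)
        atTop ≤ 0) :
    ∀ᵐ ω ∂μ, Tendsto
      (fun M : ℕ => Metric.infDist (empDist (fun t => play t ω) M) (HannanSet u))
      atTop (nhds 0) := by
  have h1 : ∀ᵐ ω ∂μ, ∀ (i : Fin n) (b : A i),
      limsup (fun M : ℕ => (∑ t ∈ Finset.range M,
        (u i (Function.update (play t ω) i b) - u i (play t ω))) / M)
        atTop ≤ 0 :=
    ae_all_iff.2 fun i => ae_all_iff.2 (hNR i)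
  filter_upwards [h1] with ω hω
  exact hannan_key u (fun t => play t ω) hω
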